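/- arXiv:0707.2079 — 3 statements merged into one kernel-verified Lean document; each statement's English description precedes it below -/
import Mathlib

section
/- Let X₁,…,Xₙ be random variables taking values in [0,1] such that for each k, E[Xₖ | X₁,…,X_{k−1}] ≤ aₖ, and let μ = ∑ aᵢ. Then for any 0 < δ ≤ 1, P[∑ Xᵢ > (1+δ)μ] ≤ exp(−δ²μ/3). -/
open MeasureTheory Real

/-- `2x/(2+x) ≤ log (1+x)` for `x ≥ 0`. -/
lemma sm_log_aux {x : ℝ} (hx : 0 ≤ x) : 2 * x / (2 + x) ≤ Real.log (1 + x) := by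
  set g : ℝ → ℝ := fun y => (2 + y) * Real.log (1 + y) - 2 * y with hg
  have hderiv : ∀ y : ℝ, 0 < y →
      HasDerivAt g (Real.log (1 + y) + (2 + y) * (1 / (1 + y)) - 2) y := by
    intro y hy
    have h1 : (1 : ℝ) + y ≠ 0 := by linarith
    have hlog : HasDerivAt (fun z : ℝ => Real.log (1 + z)) (1 / (1 + y)) y := by
      have := (Real.hasDerivAt_log h1).comp y ((hasDerivAt_id y).const_add 1)
      simpa [one_div, Function.comp_def] using this
    have hmul : HasDerivAt (fun z : ℝ => (2 + z) * Real.log (1 + z))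
        (1 * Real.log (1 + y) + (2 + y) * (1 / (1 + y))) y :=
      ((hasDerivAt_id y).const_add 2).mul hlog
    have := hmul.sub ((hasDerivAt_id y).const_mul 2)
    simpa [hg, mul_comm, Pi.sub_def] using this
  have hmono : MonotoneOn g (Set.Ici (0 : ℝ)) := by
    apply monotoneOn_of_deriv_nonneg (convex_Ici 0)
    · apply ContinuousOn.sub
      · apply ContinuousOn.mul (by fun_prop)
        apply ContinuousOn.log (by fun_prop)
        intro y hy
        have hy' : (0:ℝ) ≤ y := hy
        intro h; linarith
      · fun_prop
    · intro y hy
      rw [interior_Ici] at hy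
      replace hy : (0:ℝ) < y := hy
      exact (hderiv y hy).differentiableAt.differentiableWithinAt
    · intro y hy
      rw [interior_Ici] at hy
      replace hy : (0:ℝ) < y := hy
      rw [(hderiv y hy).deriv]
      have h1 : (0 : ℝ) < 1 + y := by linarith
      have := Real.one_sub_inv_le_log_of_pos h1
      have h2 : (2 + y) * (1 / (1 + y)) = 1 + (1 + y)⁻¹ := by
        field_simp; ring
      rw [h2]; linarith
  have h0 : g 0 ≤ g x := hmono (Set.self_mem_Ici) hx hx
  have hg0 : g 0 = 0 := by simp [hg]
  have hgx : 2 * x ≤ (2 + x) * Real.log (1 + x) := by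
    simp only [hg] at h0
    norm_num at h0
    linarith
  rw [div_le_iff₀ (by linarith : (0:ℝ) < 2 + x)]
  linarith

/-- Key numeric estimate for the Chernoff exponent. -/
lemma sm_key {δ : ℝ} (hδ0 : 0 < δ) (hδ1 : δ ≤ 1) :
    δ + δ ^ 2 / 3 ≤ (1 + δ) * Real.log (1 + δ) := by
  have h := sm_log_aux hδ0.le
  have h2 : (0:ℝ) < 2 + δ := by linarith
  have h3 : (1 + δ) * (2 * δ / (2 + δ)) ≤ (1 + δ) * Real.log (1 + δ) :=
    mul_le_mul_of_nonneg_left h (by linarith)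
  have h4 : δ + δ ^ 2 / 3 ≤ (1 + δ) * (2 * δ / (2 + δ)) := by
    rw [mul_div_assoc'] at *
    rw [le_div_iff₀ h2]
    nlinarith
  linarith

/-- Convexity bound: `exp (t x) ≤ 1 + (e^t - 1) x` for `x ∈ [0,1]`. -/
lemma sm_exp_bound {t x : ℝ} (hx0 : 0 ≤ x) (hx1 : x ≤ 1) :
    Real.exp (t * x) ≤ 1 + (Real.exp t - 1) * x := by
  have := convexOn_exp.2 (Set.mem_univ (0:ℝ)) (Set.mem_univ t)
    (by linarith : (0:ℝ) ≤ 1 - x) hx0 (by ring)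
  simp only [smul_eq_mul, mul_zero, zero_add, Real.exp_zero, mul_one] at this
  calc Real.exp (t * x) = Real.exp (x * t) := by rw [mul_comm]
    _ ≤ (1 - x) + x * Real.exp t := this
    _ = 1 + (Real.exp t - 1) * x := by ring
/-- Supermartingale tail estimate: if `X₁,…,Xₙ` take values in `[0,1]` and
`E[Xₖ | X₁,…,X_{k-1}] ≤ aₖ`, with `μ = ∑ aᵢ`, then for `0 < δ ≤ 1`,
`P[∑ Xᵢ > (1+δ)μ] ≤ exp(-δ²μ/3)`. -/
theorem supermartingale_tail {Ω : Type*} [MeasurableSpace Ω]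
    (μ : Measure Ω) [IsProbabilityMeasure μ]
    (n : ℕ) (X : Fin n → Ω → ℝ) (a : Fin n → ℝ)
    (hmeas : ∀ i, Measurable (X i))
    (hrange : ∀ i ω, X i ω ∈ Set.Icc (0 : ℝ) 1)
    (ha : ∀ i, 0 ≤ a i)
    (hcond : ∀ k : Fin n,
      μ[X k | ⨆ i : Fin n, ⨆ _ : i < k, MeasurableSpace.comap (X i) inferInstance]
        ≤ᵐ[μ] fun _ => a k)
    (δ : ℝ) (hδ0 : 0 < δ) (hδ1 : δ ≤ 1) :
    μ {ω | (1 + δ) * (∑ i, a i) < ∑ i, X i ω}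
      ≤ ENNReal.ofReal (Real.exp (-(δ ^ 2 * (∑ i, a i)) / 3)) := by
  classical
  set A : ℝ := ∑ i, a i with hA
  have hA0 : 0 ≤ A := Finset.sum_nonneg fun i _ => ha i
  set t : ℝ := Real.log (1 + δ) with htdef
  have hexp_t : Real.exp t = 1 + δ := Real.exp_log (by linarith)
  have ht0 : 0 < t := Real.log_pos (by linarith)
  -- partial sums
  set S : ℕ → Ω → ℝ := fun k ω => ∑ i ∈ Finset.univ.filter (fun i : Fin n => (i : ℕ) < k), X i ω
    with hS
  have hSmeas : ∀ k, Measurable (S k) := fun k =>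
    Finset.measurable_sum _ fun i _ => hmeas i
  have hSnonneg : ∀ k ω, 0 ≤ S k ω := fun k ω =>
    Finset.sum_nonneg fun i _ => (hrange i ω).1
  have hSle : ∀ k ω, S k ω ≤ n := by
    intro k ω
    calc S k ω ≤ ∑ _i ∈ Finset.univ.filter (fun i : Fin n => (i : ℕ) < k), (1:ℝ) :=
          Finset.sum_le_sum fun i _ => (hrange i ω).2
      _ ≤ ∑ _i : Fin n, (1:ℝ) := Finset.sum_le_sum_of_subset_of_nonneg (Finset.filter_subset _ _) (fun _ _ _ => zero_le_one)
      _ = n := by simp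
  have hfmeas : ∀ k, Measurable fun ω => Real.exp (t * S k ω) := fun k =>
    (Real.measurable_exp.comp ((hSmeas k).const_mul t))
  have hfint : ∀ k, Integrable (fun ω => Real.exp (t * S k ω)) μ := by
    intro k
    refine Integrable.mono' (integrable_const (Real.exp (t * n)))
      (hfmeas k).aestronglyMeasurable (Filter.Eventually.of_forall fun ω => ?_)
    rw [Real.norm_eq_abs, abs_of_pos (Real.exp_pos _)]
    exact Real.exp_le_exp.mpr (mul_le_mul_of_nonneg_left (hSle k ω) ht0.le)
  have hXint : ∀ j : Fin n, Integrable (X j) μ := by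
    intro j
    refine Integrable.mono' (integrable_const 1)
      (hmeas j).aestronglyMeasurable (Filter.Eventually.of_forall fun ω => ?_)
    rw [Real.norm_eq_abs, abs_of_nonneg (hrange j ω).1]
    exact (hrange j ω).2
  -- main induction
  have hmain : ∀ k, k ≤ n → ∫ ω, Real.exp (t * S k ω) ∂μ ≤
      ∏ i ∈ Finset.univ.filter (fun i : Fin n => (i : ℕ) < k), (1 + δ * a i) := by
    intro k
    induction k with
    | zero =>
      intro _
      have h1 : Finset.univ.filter (fun i : Fin n => (i : ℕ) < 0) = ∅ := by
        simp
      simp [hS, h1]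
    | succ k ih =>
      intro hk1
      have hk : k < n := hk1
      have ihk := ih (Nat.le_of_succ_le hk1)
      set j : Fin n := ⟨k, hk⟩ with hj
      -- filter splitting
      have hjval : (j : ℕ) = k := rfl
      have hjnot : j ∉ Finset.univ.filter (fun i : Fin n => (i : ℕ) < k) := by
        simp [hjval]
      have hfilter : Finset.univ.filter (fun i : Fin n => (i : ℕ) < k + 1)
          = insert j (Finset.univ.filter (fun i : Fin n => (i : ℕ) < k)) := by
        ext i
        simp only [Finset.mem_filter, Finset.mem_univ, true_and, Finset.mem_insert]
        constructor
        · intro h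
          rcases Nat.lt_succ_iff_lt_or_eq.mp h with h | h
          · exact Or.inr h
          · exact Or.inl (Fin.ext h)
        · rintro (h | h)
          · rw [h]; exact Nat.lt_succ_self k
          · exact Nat.lt_succ_of_lt h
      have hSsucc : ∀ ω, S (k + 1) ω = X j ω + S k ω := by
        intro ω
        simp only [hS]
        rw [hfilter, Finset.sum_insert hjnot]
      -- the conditional-expectation σ-algebra
      set m : MeasurableSpace Ω :=
        ⨆ i : Fin n, ⨆ _ : i < j, MeasurableSpace.comap (X i) inferInstance with hmdef
      have hm : m ≤ _ :=
        iSup_le fun i => iSup_le fun _ => measurable_iff_comap_le.mp (hmeas i)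
      have hXim : ∀ i : Fin n, i < j → Measurable[m] (X i) := by
        intro i hij
        refine measurable_iff_comap_le.mpr ?_
        exact le_iSup_of_le i (le_iSup (fun _ : i < j => MeasurableSpace.comap (X i)
          inferInstance) hij)
      have hSm : Measurable[m] (S k) := by
        refine Finset.measurable_sum _ fun i hi => ?_
        refine hXim i ?_
        simp only [Finset.mem_filter] at hi
        exact hi.2
      have hf_sm : StronglyMeasurable[m] fun ω => Real.exp (t * S k ω) :=
        (Real.measurable_exp.comp (hSm.const_mul t)).stronglyMeasurable
      have hprod_int : Integrable (fun ω => Real.exp (t * S k ω) * X j ω) μ :=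
        (hXint j).bdd_mul (hfmeas k).aestronglyMeasurable
          (c := Real.exp (t * n)) (Filter.Eventually.of_forall fun ω => by
            rw [Real.norm_eq_abs, abs_of_pos (Real.exp_pos _)]
            exact Real.exp_le_exp.mpr (mul_le_mul_of_nonneg_left (hSle k ω) ht0.le))
      -- the pull-out estimate
      have hpull : ∫ ω, Real.exp (t * S k ω) * X j ω ∂μ
          ≤ a j * ∫ ω, Real.exp (t * S k ω) ∂μ := by
        have h1 : ∫ ω, Real.exp (t * S k ω) * X j ω ∂μ
            = ∫ ω, (μ[(fun ω => Real.exp (t * S k ω) * X j ω) | m]) ω ∂μ :=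
          (integral_condExp hm).symm
        have h2 : μ[(fun ω => Real.exp (t * S k ω) * X j ω) | m]
            =ᵐ[μ] fun ω => Real.exp (t * S k ω) * (μ[X j | m]) ω := by
          have := condExp_stronglyMeasurable_mul_of_bound hm hf_sm (hXint j)
            (Real.exp (t * n)) (Filter.Eventually.of_forall fun ω => by
              rw [Real.norm_eq_abs, abs_of_pos (Real.exp_pos _)]
              exact Real.exp_le_exp.mpr (mul_le_mul_of_nonneg_left (hSle k ω) ht0.le))
          exact this
        have hcond_int : Integrable (fun ω => Real.exp (t * S k ω) * (μ[X j | m]) ω) μ :=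
          integrable_condExp.bdd_mul (hfmeas k).aestronglyMeasurable
            (c := Real.exp (t * n)) (Filter.Eventually.of_forall fun ω => by
              rw [Real.norm_eq_abs, abs_of_pos (Real.exp_pos _)]
              exact Real.exp_le_exp.mpr (mul_le_mul_of_nonneg_left (hSle k ω) ht0.le))
        calc ∫ ω, Real.exp (t * S k ω) * X j ω ∂μ
            = ∫ ω, (μ[(fun ω => Real.exp (t * S k ω) * X j ω) | m]) ω ∂μ := h1
          _ = ∫ ω, Real.exp (t * S k ω) * (μ[X j | m]) ω ∂μ := integral_congr_ae h2
          _ ≤ ∫ ω, Real.exp (t * S k ω) * a j ∂μ := by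
              refine integral_mono_ae hcond_int ((hfint k).mul_const _) ?_
              filter_upwards [hcond j] with ω hω
              exact mul_le_mul_of_nonneg_left hω (Real.exp_pos _).le
          _ = a j * ∫ ω, Real.exp (t * S k ω) ∂μ := by
              rw [integral_mul_const]; ring
      -- combine
      have hint_rhs : Integrable
          (fun ω => Real.exp (t * S k ω) + δ * (Real.exp (t * S k ω) * X j ω)) μ :=
        (hfint k).add (hprod_int.const_mul δ)
      have hprod_nonneg : 0 ≤ ∫ ω, Real.exp (t * S k ω) ∂μ :=
        integral_nonneg fun ω => (Real.exp_pos _).le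
      calc ∫ ω, Real.exp (t * S (k + 1) ω) ∂μ
          ≤ ∫ ω, (Real.exp (t * S k ω) + δ * (Real.exp (t * S k ω) * X j ω)) ∂μ := by
            refine integral_mono (hfint (k + 1)) hint_rhs fun ω => ?_
            rw [hSsucc ω]
            have h1 : Real.exp (t * (X j ω + S k ω))
                = Real.exp (t * S k ω) * Real.exp (t * X j ω) := by
              rw [← Real.exp_add]; ring_nf
            rw [h1]
            have h2 : Real.exp (t * X j ω) ≤ 1 + δ * X j ω := by
              have := sm_exp_bound (t := t) (hrange j ω).1 (hrange j ω).2
              rwa [hexp_t, add_sub_cancel_left] at this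
            nlinarith [Real.exp_pos (t * S k ω), (hrange j ω).1]
        _ = (∫ ω, Real.exp (t * S k ω) ∂μ)
              + δ * ∫ ω, Real.exp (t * S k ω) * X j ω ∂μ := by
            rw [integral_add (hfint k) (hprod_int.const_mul δ), integral_const_mul]
        _ ≤ (∫ ω, Real.exp (t * S k ω) ∂μ)
              + δ * (a j * ∫ ω, Real.exp (t * S k ω) ∂μ) := by
            have := mul_le_mul_of_nonneg_left hpull hδ0.le
            linarith
        _ = (1 + δ * a j) * ∫ ω, Real.exp (t * S k ω) ∂μ := by ring
        _ ≤ (1 + δ * a j) * ∏ i ∈ Finset.univ.filter (fun i : Fin n => (i : ℕ) < k),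
              (1 + δ * a i) := by
            refine mul_le_mul_of_nonneg_left ihk ?_
            have := ha j
            nlinarith
        _ = ∏ i ∈ Finset.univ.filter (fun i : Fin n => (i : ℕ) < k + 1), (1 + δ * a i) := by
            rw [hfilter, Finset.prod_insert hjnot]
  -- the full sum
  have hfull : Finset.univ.filter (fun i : Fin n => (i : ℕ) < n) = Finset.univ := by
    ext i; simp [i.isLt]
  have hSn : ∀ ω, S n ω = ∑ i, X i ω := by
    intro ω; simp only [hS]; rw [hfull]
  -- bound on mgf
  have hmgf : ∫ ω, Real.exp (t * ∑ i, X i ω) ∂μ ≤ Real.exp (δ * A) := by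
    have h1 : ∫ ω, Real.exp (t * ∑ i, X i ω) ∂μ = ∫ ω, Real.exp (t * S n ω) ∂μ := by
      refine integral_congr_ae (Filter.Eventually.of_forall fun ω => ?_)
      simp [hSn]
    rw [h1]
    refine (hmain n le_rfl).trans ?_
    rw [hfull]
    calc ∏ i : Fin n, (1 + δ * a i) ≤ ∏ i : Fin n, Real.exp (δ * a i) := by
          refine Finset.prod_le_prod (fun i _ => by nlinarith [ha i]) fun i _ => ?_
          have := Real.add_one_le_exp (δ * a i)
          linarith
      _ = Real.exp (∑ i, δ * a i) := (Real.exp_sum _ _).symm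
      _ = Real.exp (δ * A) := by rw [← Finset.mul_sum]
  -- Markov / Chernoff
  have hfintn : Integrable (fun ω => Real.exp (t * ∑ i, X i ω)) μ := by
    refine (hfint n).congr (Filter.Eventually.of_forall fun ω => ?_)
    simp [hSn]
  have hcher := ProbabilityTheory.measure_ge_le_exp_mul_mgf (X := fun ω => ∑ i, X i ω)
    (μ := μ) (t := t) ((1 + δ) * A) ht0.le hfintn
  have hsub : μ {ω | (1 + δ) * A < ∑ i, X i ω} ≤ μ {ω | (1 + δ) * A ≤ ∑ i, X i ω} :=
    measure_mono fun ω hω => by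
      simp only [Set.mem_setOf_eq] at hω ⊢; exact hω.le
  have hne : μ {ω | (1 + δ) * A ≤ ∑ i, X i ω} ≠ ⊤ := measure_ne_top _ _
  have hfin : (μ {ω | (1 + δ) * A ≤ ∑ i, X i ω}).toReal
      ≤ Real.exp (-(δ ^ 2 * A) / 3) := by
    refine hcher.trans ?_
    have hmgf' : ProbabilityTheory.mgf (fun ω => ∑ i, X i ω) μ t ≤ Real.exp (δ * A) := hmgf
    have hmgfpos : 0 < Real.exp (-t * ((1 + δ) * A)) := Real.exp_pos _
    calc Real.exp (-t * ((1 + δ) * A)) * ProbabilityTheory.mgf (fun ω => ∑ i, X i ω) μ t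
        ≤ Real.exp (-t * ((1 + δ) * A)) * Real.exp (δ * A) :=
          mul_le_mul_of_nonneg_left hmgf' hmgfpos.le
      _ = Real.exp (δ * A - t * ((1 + δ) * A)) := by rw [← Real.exp_add]; ring_nf
      _ ≤ Real.exp (-(δ ^ 2 * A) / 3) := by
          refine Real.exp_le_exp.mpr ?_
          have hkey := sm_key hδ0 hδ1
          nlinarith [hA0]
  calc μ {ω | (1 + δ) * A < ∑ i, X i ω}
      ≤ μ {ω | (1 + δ) * A ≤ ∑ i, X i ω} := hsub
    _ = ENNReal.ofReal ((μ {ω | (1 + δ) * A ≤ ∑ i, X i ω}).toReal) :=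
        (ENNReal.ofReal_toReal hne).symm
    _ ≤ ENNReal.ofReal (Real.exp (-(δ ^ 2 * A) / 3)) := ENNReal.ofReal_le_ofReal hfin
end

section
/- Let H be a bipartite graph with parts A of size d and B, such that every vertex of B has degree at least 2·s^{1/(t−1)}·d^{(t−2)/(t−1)} (where s ≥ t ≥ 3), and H contains no complete bipartite subgraph K_{s,t−1} with s vertices in A and t−1 vertices in B. Then H has at most 2td edges. -/
open Finset

set_option maxHeartbeats 1600000 in
/-- Let `H` be a bipartite graph with parts `A` of size `d` and `B`, given by
an incidence relation `r : A → B → Prop`, such that every vertex of `B` has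
degree at least `2·s^{1/(t-1)}·d^{(t-2)/(t-1)}` (where `s ≥ t ≥ 3`), and `H`
contains no complete bipartite `K_{s,t-1}` with `s` vertices in `A` and `t-1`
vertices in `B`. Then `H` has at most `2td` edges. -/
theorem edges_le_of_no_Kst_minus {A B : Type*} [Fintype A] [Fintype B]
    (r : A → B → Prop) [∀ a b, Decidable (r a b)]
    (s t d : ℕ) (hts : t ≤ s) (ht : 3 ≤ t) (hd : 1 ≤ d)
    (hA : Fintype.card A = d)
    (hdegB : ∀ b : B,
      2 * (s : ℝ) ^ ((1 : ℝ) / ((t : ℝ) - 1)) * (d : ℝ) ^ (((t : ℝ) - 2) / ((t : ℝ) - 1))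
        ≤ (Finset.univ.filter (fun a : A => r a b)).card)
    (hfree : ¬ ∃ (S : Finset A) (T' : Finset B), S.card = s ∧ T'.card = t - 1 ∧
      ∀ a ∈ S, ∀ b ∈ T', r a b) :
    (Finset.univ.filter (fun p : A × B => r p.1 p.2)).card ≤ 2 * t * d := by
  classical
  by_contra hcon
  push_neg at hcon
  set k : ℕ := t - 1 with hk
  set E : ℕ := (Finset.univ.filter (fun p : A × B => r p.1 p.2)).card with hE
  set deg : A → ℕ := fun a => (Finset.univ.filter (fun b => r a b)).card with hdeg
  set m : ℕ := Fintype.card B with hm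
  set D : ℝ := 2 * (s : ℝ) ^ ((1 : ℝ) / ((t : ℝ) - 1)) *
      (d : ℝ) ^ (((t : ℝ) - 2) / ((t : ℝ) - 1)) with hD
  -- basic positivity / cast facts
  have htR : (3 : ℝ) ≤ (t : ℝ) := by exact_mod_cast ht
  have hsR : (t : ℝ) ≤ (s : ℝ) := by exact_mod_cast hts
  have hs0 : (0 : ℝ) < (s : ℝ) := by linarith
  have hd0 : (0 : ℝ) < (d : ℝ) := by exact_mod_cast hd
  have hk2 : 2 ≤ k := by omega
  have hkR : ((k : ℕ) : ℝ) = (t : ℝ) - 1 := by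
    rw [hk, Nat.cast_sub (by omega : 1 ≤ t), Nat.cast_one]
  have hkR1 : (((k - 1 : ℕ)) : ℝ) = (t : ℝ) - 2 := by
    rw [Nat.cast_sub (by omega : 1 ≤ k), Nat.cast_one, hkR]; ring
  have hDpos : (0 : ℝ) < D := by rw [hD]; positivity
  -- edge count as sum of A-degrees
  have hEsum : E = ∑ a : A, deg a := by
    simp only [hE, hdeg, Finset.card_filter]
    rw [Fintype.sum_prod_type]
  -- edge count as sum of B-degrees
  have hEsumB : E = ∑ b : B, (Finset.univ.filter (fun a : A => r a b)).card := by
    simp only [hE, Finset.card_filter]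
    rw [Fintype.sum_prod_type, Finset.sum_comm]
  -- |B| * D ≤ E
  have hmD : (m : ℝ) * D ≤ (E : ℝ) := by
    have h1 : ∑ _b : B, D ≤ ∑ b : B, ((Finset.univ.filter (fun a : A => r a b)).card : ℝ) :=
      Finset.sum_le_sum fun b _ => hdegB b
    rw [Finset.sum_const, Finset.card_univ, nsmul_eq_mul] at h1
    have h2 : (E : ℝ) = ∑ b : B, ((Finset.univ.filter (fun a : A => r a b)).card : ℝ) := by
      rw [hEsumB]; push_cast; rfl
    rw [h2]; exact h1
  have hEpos : 0 < E := lt_of_le_of_lt (Nat.zero_le _) hcon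
  have hERpos : (0 : ℝ) < (E : ℝ) := by exact_mod_cast hEpos
  have hconR : 2 * (t : ℝ) * (d : ℝ) < (E : ℝ) := by exact_mod_cast hcon
  -- key double counting: ∑ C(deg a, k) ≤ (s-1) C(m, k)
  have hcount : ∑ a : A, (deg a).choose k ≤ (s - 1) * m.choose k := by
    have hrw : ∀ a : A, (deg a).choose k =
        ((Finset.univ.powersetCard k).filter
          (fun T => T ⊆ Finset.univ.filter (fun b => r a b))).card := by
      intro a
      rw [hdeg, ← Finset.card_powersetCard]
      congr 1
      ext T
      simp only [Finset.mem_powersetCard, Finset.mem_filter, Finset.subset_univ, true_and]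
      tauto
    have hperT : ∀ T ∈ Finset.univ.powersetCard k,
        (Finset.univ.filter (fun a : A => T ⊆ Finset.univ.filter (fun b => r a b))).card
          ≤ s - 1 := by
      intro T hT
      by_contra hle
      push_neg at hle
      have hs : s ≤ (Finset.univ.filter
          (fun a : A => T ⊆ Finset.univ.filter (fun b => r a b))).card := by omega
      obtain ⟨S, hSsub, hScard⟩ := Finset.exists_subset_card_eq hs
      refine hfree ⟨S, T, hScard, (Finset.mem_powersetCard.mp hT).2, ?_⟩
      intro a ha b hb
      have h1 := (Finset.mem_filter.mp (hSsub ha)).2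
      exact (Finset.mem_filter.mp (h1 hb)).2
    calc ∑ a : A, (deg a).choose k
        = ∑ a : A, ∑ T ∈ Finset.univ.powersetCard k,
            ite (T ⊆ Finset.univ.filter (fun b => r a b)) 1 0 := by
          simp only [hrw, Finset.card_filter]
      _ = ∑ T ∈ Finset.univ.powersetCard k,
            (Finset.univ.filter
              (fun a : A => T ⊆ Finset.univ.filter (fun b => r a b))).card := by
          rw [Finset.sum_comm]
          simp only [Finset.card_filter]
      _ ≤ ∑ _T ∈ Finset.univ.powersetCard k, (s - 1) := Finset.sum_le_sum hperT
      _ = (s - 1) * m.choose k := by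
          rw [Finset.sum_const, Finset.card_powersetCard, Finset.card_univ, smul_eq_mul,
            mul_comm, hm]
  -- the truncated degree function
  set g : A → ℝ := fun a => max ((deg a : ℝ) - ((t : ℝ) - 2)) 0 with hg
  have hg0 : ∀ a ∈ (Finset.univ : Finset A), 0 ≤ g a := fun a _ => le_max_right _ _
  -- pointwise: g a ^ k ≤ k! * C(deg a, k)
  have hg5 : ∀ a : A, g a ^ k ≤ (k.factorial : ℝ) * ((deg a).choose k : ℝ) := by
    intro a
    rcases le_or_gt ((deg a : ℝ) - ((t : ℝ) - 2)) 0 with h | h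
    · rw [hg]
      simp only [max_eq_right h]
      rw [zero_pow (by omega : k ≠ 0)]
      positivity
    · rw [hg]
      simp only [max_eq_left h.le]
      have ht2 : t - 2 ≤ deg a := by
        have : (t : ℝ) - 2 < (deg a : ℝ) := by linarith
        have h2 : ((t - 2 : ℕ) : ℝ) < (deg a : ℝ) := by
          rwa [Nat.cast_sub (by omega : 2 ≤ t), Nat.cast_ofNat]
        exact_mod_cast h2.le
      have hnat : (deg a + 1 - k) ^ k ≤ (deg a).descFactorial k :=
        Nat.pow_sub_le_descFactorial _ _
      rw [Nat.descFactorial_eq_factorial_mul_choose] at hnat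
      have heq : (deg a : ℝ) - ((t : ℝ) - 2) = ((deg a + 1 - k : ℕ) : ℝ) := by
        rw [Nat.cast_sub (by omega : k ≤ deg a + 1)]
        push_cast [hkR]
        ring
      rw [heq]
      exact_mod_cast hnat
  -- Jensen
  have hJ : (∑ a : A, g a) ^ k / (d : ℝ) ^ (k - 1) ≤ ∑ a : A, g a ^ k := by
    have h := pow_sum_div_card_le_sum_pow (s := (Finset.univ : Finset A)) (f := g) hg0 (k - 1)
    rw [show k - 1 + 1 = k by omega, Finset.card_univ, hA] at h
    exact h
  -- lower bound for ∑ g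
  have hgsum : (E : ℝ) / 2 ≤ ∑ a : A, g a := by
    have h1 : (E : ℝ) - ((t : ℝ) - 2) * (d : ℝ) ≤ ∑ a : A, g a := by
      have h2 : ∑ a : A, ((deg a : ℝ) - ((t : ℝ) - 2)) ≤ ∑ a : A, g a :=
        Finset.sum_le_sum fun a _ => le_max_left _ _
      have h3 : ∑ a : A, ((deg a : ℝ) - ((t : ℝ) - 2))
          = (E : ℝ) - ((t : ℝ) - 2) * (d : ℝ) := by
        rw [Finset.sum_sub_distrib, Finset.sum_const, Finset.card_univ, hA, nsmul_eq_mul]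
        have h4 : (E : ℝ) = ∑ a : A, (deg a : ℝ) := by rw [hEsum]; push_cast; rfl
        rw [← h4]; ring
      linarith
    nlinarith [hd0.le, htR]
  -- assemble the chain
  have hmle : (m : ℝ) ≤ (E : ℝ) / D := (le_div_iff₀ hDpos).mpr hmD
  have hchain : ((E : ℝ) / 2) ^ k
      ≤ (d : ℝ) ^ (k - 1) * ((s - 1 : ℕ) : ℝ) * ((E : ℝ) / D) ^ k := by
    have c1 : ((E : ℝ) / 2) ^ k ≤ (∑ a : A, g a) ^ k :=
      pow_le_pow_left₀ (by positivity) hgsum k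
    have c2 : (∑ a : A, g a) ^ k ≤ (d : ℝ) ^ (k - 1) * ∑ a : A, g a ^ k := by
      rw [div_le_iff₀ (by positivity)] at hJ
      linarith [hJ]
    have c3 : ∑ a : A, g a ^ k ≤ (k.factorial : ℝ) * ∑ a : A, ((deg a).choose k : ℝ) := by
      rw [Finset.mul_sum]
      exact Finset.sum_le_sum fun a _ => hg5 a
    have c4 : (k.factorial : ℝ) * ∑ a : A, ((deg a).choose k : ℝ)
        ≤ (k.factorial : ℝ) * (((s - 1) * m.choose k : ℕ) : ℝ) := by
      have : (∑ a : A, ((deg a).choose k : ℝ)) ≤ (((s - 1) * m.choose k : ℕ) : ℝ) := by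
        push_cast
        exact_mod_cast hcount
      exact mul_le_mul_of_nonneg_left this (by positivity)
    have c5 : (k.factorial : ℝ) * (((s - 1) * m.choose k : ℕ) : ℝ)
        ≤ ((s - 1 : ℕ) : ℝ) * ((m : ℝ)) ^ k := by
      have hnat : k.factorial * ((s - 1) * m.choose k) ≤ (s - 1) * m ^ k := by
        have h1 : k.factorial * m.choose k ≤ m ^ k := by
          rw [← Nat.descFactorial_eq_factorial_mul_choose]
          exact Nat.descFactorial_le_pow m k
        calc k.factorial * ((s - 1) * m.choose k) = (s - 1) * (k.factorial * m.choose k) := by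
              ring
          _ ≤ (s - 1) * m ^ k := Nat.mul_le_mul_left _ h1
      exact_mod_cast hnat
    have c6 : ((s - 1 : ℕ) : ℝ) * ((m : ℝ)) ^ k
        ≤ ((s - 1 : ℕ) : ℝ) * ((E : ℝ) / D) ^ k := by
      have := pow_le_pow_left₀ (by positivity : (0 : ℝ) ≤ (m : ℝ)) hmle k
      exact mul_le_mul_of_nonneg_left this (by positivity)
    have c23 : (d : ℝ) ^ (k - 1) * ∑ a : A, g a ^ k
        ≤ (d : ℝ) ^ (k - 1) * (((s - 1 : ℕ) : ℝ) * ((E : ℝ) / D) ^ k) := by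
      refine mul_le_mul_of_nonneg_left ?_ (by positivity)
      exact le_trans c3 (le_trans c4 (le_trans c5 c6))
    calc ((E : ℝ) / 2) ^ k ≤ (∑ a : A, g a) ^ k := c1
      _ ≤ (d : ℝ) ^ (k - 1) * ∑ a : A, g a ^ k := c2
      _ ≤ (d : ℝ) ^ (k - 1) * (((s - 1 : ℕ) : ℝ) * ((E : ℝ) / D) ^ k) := c23
      _ = (d : ℝ) ^ (k - 1) * ((s - 1 : ℕ) : ℝ) * ((E : ℝ) / D) ^ k := by ring
  -- deduce D^k ≤ 2^k d^(k-1) (s-1)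
  have hfinal : D ^ k ≤ 2 ^ k * ((d : ℝ) ^ (k - 1) * ((s - 1 : ℕ) : ℝ)) := by
    have hP : (0 : ℝ) < ((E : ℝ) / D) ^ k := by positivity
    rw [← mul_le_mul_iff_of_pos_right hP]
    calc D ^ k * ((E : ℝ) / D) ^ k = (E : ℝ) ^ k := by
          rw [← mul_pow]; congr 1; field_simp
      _ = 2 ^ k * ((E : ℝ) / 2) ^ k := by
          rw [← mul_pow]; congr 1; ring
      _ ≤ 2 ^ k * ((d : ℝ) ^ (k - 1) * ((s - 1 : ℕ) : ℝ) * ((E : ℝ) / D) ^ k) :=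
          mul_le_mul_of_nonneg_left hchain (by positivity)
      _ = 2 ^ k * ((d : ℝ) ^ (k - 1) * ((s - 1 : ℕ) : ℝ)) * ((E : ℝ) / D) ^ k := by ring
  -- compute D^k explicitly
  have hDk : D ^ k = 2 ^ k * ((d : ℝ) ^ (k - 1) * (s : ℝ)) := by
    have ht1 : ((t : ℝ) - 1) ≠ 0 := by linarith
    have h1 : ((s : ℝ) ^ ((1 : ℝ) / ((t : ℝ) - 1))) ^ k = (s : ℝ) := by
      rw [← Real.rpow_natCast ((s : ℝ) ^ ((1 : ℝ) / ((t : ℝ) - 1))) k,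
        ← Real.rpow_mul hs0.le, hkR]
      rw [show (1 : ℝ) / ((t : ℝ) - 1) * ((t : ℝ) - 1) = 1 by field_simp]
      exact Real.rpow_one _
    have h2 : ((d : ℝ) ^ (((t : ℝ) - 2) / ((t : ℝ) - 1))) ^ k = (d : ℝ) ^ (k - 1) := by
      rw [← Real.rpow_natCast ((d : ℝ) ^ (((t : ℝ) - 2) / ((t : ℝ) - 1))) k,
        ← Real.rpow_mul hd0.le, hkR]
      rw [show ((t : ℝ) - 2) / ((t : ℝ) - 1) * ((t : ℝ) - 1) = (t : ℝ) - 2 by field_simp]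
      rw [← hkR1, Real.rpow_natCast]
    rw [hD, mul_pow, mul_pow, h1, h2]
    ring
  -- contradiction
  rw [hDk] at hfinal
  have hlt : ((s - 1 : ℕ) : ℝ) < (s : ℝ) := by
    exact_mod_cast Nat.sub_lt (by omega) one_pos
  have hpos : (0 : ℝ) < 2 ^ k * (d : ℝ) ^ (k - 1) := by positivity
  nlinarith [mul_pos hpos (sub_pos.mpr hlt)]
end

section
/- Let H be a bipartite graph with parts A of size d and B, with m > 2td edges, where every vertex of B has degree at least 2·s^{1/(t−1)}·d^{(t−2)/(t−1)}. Then the number of stars K_{1,t−1} with center in A and t−1 leaves in B is at least s·C(|B|, t−1), where C denotes the binomial coefficient. -/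
/-- Let `H` be a bipartite graph with parts `A` of size `d` and `B`, with
`m > 2td` edges, where every vertex of `B` has degree at least
`2·s^{1/(t-1)}·d^{(t-2)/(t-1)}` (with `s ≥ t ≥ 3`). Then the number of stars
`K_{1,t-1}` with center in `A` and `t-1` leaves in `B`, namely
`∑_{a∈A} C(deg(a), t-1)`, is at least `s·C(|B|, t-1)`. -/
theorem stars_ge_of_many_edges {A B : Type*} [Fintype A] [Fintype B]
    (r : A → B → Prop) [∀ a b, Decidable (r a b)]
    (s t d : ℕ) (hts : t ≤ s) (ht : 3 ≤ t) (hd : 1 ≤ d)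
    (hA : Fintype.card A = d)
    (hdegB : ∀ b : B,
      2 * (s : ℝ) ^ ((1 : ℝ) / ((t : ℝ) - 1)) * (d : ℝ) ^ (((t : ℝ) - 2) / ((t : ℝ) - 1))
        ≤ (Finset.univ.filter (fun a : A => r a b)).card)
    (hm : 2 * t * d < (Finset.univ.filter (fun p : A × B => r p.1 p.2)).card) :
    s * Nat.choose (Fintype.card B) (t - 1)
      ≤ ∑ a : A, Nat.choose (Finset.univ.filter (fun b : B => r a b)).card (t - 1) := by
  classical
  have htR : (3:ℝ) ≤ (t:ℝ) := by exact_mod_cast ht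
  set k := t - 1 with hk
  have hk1 : 1 ≤ k := by omega
  have hkc : (k : ℝ) = (t : ℝ) - 1 := by
    rw [hk]; push_cast [Nat.cast_sub (by omega : 1 ≤ t)]; ring
  have hk1c : ((k - 1 : ℕ) : ℝ) = (t : ℝ) - 2 := by
    have hkk : k - 1 = t - 2 := by omega
    rw [hkk]; push_cast [Nat.cast_sub (by omega : 2 ≤ t)]; ring
  set m := (Finset.univ.filter (fun p : A × B => r p.1 p.2)).card with hmdef
  set n := Fintype.card B with hn
  have degsumA : m = ∑ a : A, (Finset.univ.filter (fun b => r a b)).card := by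
    rw [hmdef, Finset.card_filter, Fintype.sum_prod_type]
    exact Finset.sum_congr rfl fun a _ => (Finset.card_filter _ _).symm
  have degsumB : m = ∑ b : B, (Finset.univ.filter (fun a => r a b)).card := by
    rw [hmdef, Finset.card_filter, Fintype.sum_prod_type_right]
    exact Finset.sum_congr rfl fun b _ => (Finset.card_filter _ _).symm
  set c1 : ℝ := (s : ℝ) ^ ((1 : ℝ) / ((t : ℝ) - 1)) with hc1
  set c2 : ℝ := (d : ℝ) ^ (((t : ℝ) - 2) / ((t : ℝ) - 1)) with hc2
  have hc1nn : 0 ≤ c1 := Real.rpow_nonneg (by positivity) _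
  have hc2nn : 0 ≤ c2 := Real.rpow_nonneg (by positivity) _
  set X : ℝ := (n : ℝ) * c1 * c2 with hX
  have hXnn : 0 ≤ X := by positivity
  have hc1k : c1 ^ k = (s : ℝ) := by
    rw [hc1, ← Real.rpow_natCast _ k, ← Real.rpow_mul (by positivity), hkc]
    rw [one_div_mul_cancel (by linarith : (t:ℝ) - 1 ≠ 0), Real.rpow_one]
  have hc2k : c2 ^ k = (d : ℝ) ^ (k - 1) := by
    rw [hc2, ← Real.rpow_natCast _ k, ← Real.rpow_mul (by positivity), hkc,
      div_mul_cancel₀ _ (by linarith : (t:ℝ) - 1 ≠ 0), ← hk1c, Real.rpow_natCast]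
  -- degree function
  set g : A → ℝ := fun a => ((Finset.univ.filter (fun b => r a b)).card : ℝ) with hg
  set f : A → ℝ := fun a => max (g a - ((t:ℝ) - 2)) 0 with hf
  have hfnn : ∀ a, 0 ≤ f a := fun a => le_max_right _ _
  -- h1 : 2 * X ≤ m
  have h1 : 2 * X ≤ (m : ℝ) := by
    have : (n : ℝ) * (2 * c1 * c2) ≤ ∑ b : B, ((Finset.univ.filter (fun a : A => r a b)).card : ℝ) := by
      calc (n : ℝ) * (2 * c1 * c2) = ∑ _b : B, (2 * c1 * c2) := by
            rw [Finset.sum_const, hn]; simp [nsmul_eq_mul]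
        _ ≤ _ := Finset.sum_le_sum (fun b _ => hdegB b)
    have hmcast : (m : ℝ) = ∑ b : B, ((Finset.univ.filter (fun a : A => r a b)).card : ℝ) := by
      rw [degsumB]; push_cast; ring
    rw [hmcast]; nlinarith [this]
  -- h2 : d * (t-2) ≤ m / 2
  have h2 : (d : ℝ) * ((t:ℝ) - 2) ≤ (m : ℝ) / 2 := by
    have : 2 * (d * (t - 2)) ≤ m := by
      calc 2 * (d * (t - 2)) ≤ 2 * (t * d) := by nlinarith [Nat.sub_le t 2]
        _ = 2 * t * d := by ring
        _ ≤ m := hm.le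
    have := (Nat.cast_le (α := ℝ)).2 this
    push_cast [Nat.cast_sub (by omega : 2 ≤ t)] at this
    linarith
  -- h3 : X ≤ ∑ f
  have hsumg : ∑ a : A, g a = (m : ℝ) := by rw [degsumA]; push_cast; rfl
  have h3 : X ≤ ∑ a : A, f a := by
    have hlow : (m : ℝ) - (d:ℝ) * ((t:ℝ) - 2) ≤ ∑ a : A, f a := by
      calc (m : ℝ) - (d:ℝ) * ((t:ℝ) - 2) = ∑ a : A, (g a - ((t:ℝ) - 2)) := by
            rw [Finset.sum_sub_distrib, hsumg, Finset.sum_const, Finset.card_univ, hA,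
              nsmul_eq_mul]
        _ ≤ ∑ a : A, f a := Finset.sum_le_sum (fun a _ => le_max_left _ _)
    nlinarith [h1, h2]
  -- per-term : f a ^ k ≤ descFactorial
  have h4 : ∀ a : A, f a ^ k ≤ ((Finset.univ.filter (fun b => r a b)).card.descFactorial k : ℝ) := by
    intro a
    set x := (Finset.univ.filter (fun b => r a b)).card with hx
    have hfa : f a ≤ ((x + 1 - k : ℕ) : ℝ) := by
      apply max_le _ (by positivity)
      have := (Nat.cast_le (α := ℝ)).2 (Nat.sub_le_iff_le_add.1 (le_refl (x + 1 - k)))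
      have hcast : (x : ℝ) + 1 - (k : ℝ) ≤ ((x + 1 - k : ℕ) : ℝ) := by
        rcases le_or_gt k (x + 1) with h | h
        · rw [Nat.cast_sub h]; push_cast; ring_nf; rfl
        · have : ((x + 1 - k : ℕ) : ℝ) = 0 := by
            rw [Nat.sub_eq_zero_of_le h.le]; simp
          rw [this]
          have : ((x:ℝ) + 1) < (k:ℝ) := by exact_mod_cast h
          linarith
      calc g a - ((t:ℝ) - 2) = (x : ℝ) + 1 - (k : ℝ) := by
            show (x : ℝ) - ((t:ℝ) - 2) = _; rw [hkc]; ring_nf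
        _ ≤ _ := hcast
    calc f a ^ k ≤ (((x + 1 - k : ℕ) : ℝ)) ^ k := pow_le_pow_left₀ (hfnn a) hfa k
      _ = (((x + 1 - k) ^ k : ℕ) : ℝ) := by push_cast; ring
      _ ≤ _ := by exact_mod_cast Nat.pow_sub_le_descFactorial x k
  -- Jensen
  have hdpow : (0:ℝ) < (d : ℝ) ^ (k - 1) := by positivity
  have h5 : (∑ a : A, f a) ^ k / (d : ℝ) ^ (k - 1) ≤ ∑ a : A, f a ^ k := by
    have := pow_sum_div_card_le_sum_pow (s := Finset.univ) (f := f)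
      (fun a _ => hfnn a) (k - 1)
    rw [Finset.card_univ, hA] at this
    have hkeq : k - 1 + 1 = k := by omega
    rwa [hkeq] at this
  -- X ^ k = s * n ^ k * d ^ (k-1)
  have hXk : X ^ k = (s : ℝ) * (n : ℝ) ^ k * (d : ℝ) ^ (k - 1) := by
    rw [hX, mul_pow, mul_pow, hc1k, hc2k]; ring
  -- assemble in ℝ
  rw [← Nat.cast_le (α := ℝ)]
  push_cast
  have hfact : (0:ℝ) < (Nat.factorial k : ℝ) := by positivity
  rw [← mul_le_mul_iff_right₀ hfact]
  have hend : (Nat.factorial k : ℝ) * ∑ a : A, ((Finset.univ.filter (fun b => r a b)).card.choose k : ℝ)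
      = ∑ a : A, ((Finset.univ.filter (fun b => r a b)).card.descFactorial k : ℝ) := by
    rw [Finset.mul_sum]
    refine Finset.sum_congr rfl (fun a _ => ?_)
    rw [← Nat.cast_mul, ← Nat.descFactorial_eq_factorial_mul_choose]
  calc (Nat.factorial k : ℝ) * ((s:ℝ) * (n.choose k : ℝ))
      = (s : ℝ) * ((Nat.factorial k * n.choose k : ℕ) : ℝ) := by push_cast; ring
    _ ≤ (s : ℝ) * (n : ℝ) ^ k := by
        apply mul_le_mul_of_nonneg_left _ (by positivity)
        rw [← Nat.descFactorial_eq_factorial_mul_choose]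
        exact_mod_cast Nat.descFactorial_le_pow n k
    _ = X ^ k / (d : ℝ) ^ (k - 1) := by rw [hXk]; field_simp
    _ ≤ (∑ a : A, f a) ^ k / (d : ℝ) ^ (k - 1) := by
        gcongr
    _ ≤ ∑ a : A, f a ^ k := h5
    _ ≤ ∑ a : A, ((Finset.univ.filter (fun b => r a b)).card.descFactorial k : ℝ) :=
        Finset.sum_le_sum (fun a _ => h4 a)
    _ = _ := hend.symm
end
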